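/- Let α, β, δ, γ be linear maps on real sequences such that the matrix operator T(ω,x) = (αω + βx, δω + γx) is bounded on Z₂. Then the quasilinear maps KP∘δ and δ∘KP from ℓ² to ℓ² are trivial: there exist linear maps L₁ and L₂ from ℓ² to real sequences and a constant C′ > 0 such that for every y ∈ ℓ², δy ∈ ℓ², KP(δy) − L₁y ∈ ℓ², δ(KP y) − L₂y ∈ ℓ², ‖KP(δy) − L₁y‖₂ ≤ C′‖y‖₂, and ‖δ(KP y) − L₂y‖₂ ≤ C′‖y‖₂. -/
import Mathlib


open scoped BigOperators

noncomputable section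

/-- Real sequences. -/
abbrev RSeq : Type := ℕ → ℝ

/-- Membership in ℓ². -/
def memL2 (x : RSeq) : Prop := Summable (fun n => (x n) ^ 2)

/-- The ℓ² norm. -/
noncomputable def l2norm (x : RSeq) : ℝ := Real.sqrt (∑' n, (x n) ^ 2)

/-- The Kalton–Peck map, defined coordinatewise.  (In Lean, `Real.log 0 = 0` and
division by zero is zero, so the conventions `0·log 0 = 0` and `KP 0 = 0` hold.) -/
noncomputable def KP (x : RSeq) : RSeq := fun n => 2 * x n * Real.log (|x n| / l2norm x)

/-- Membership in the Kalton–Peck space Z₂. -/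
def memZ2 (u : RSeq × RSeq) : Prop := memL2 u.2 ∧ memL2 (u.1 - KP u.2)

/-- The Z₂ quasinorm. -/
noncomputable def Z2norm (u : RSeq × RSeq) : ℝ := l2norm (u.1 - KP u.2) + l2norm u.2

/-- A map on pairs of sequences is bounded on Z₂. -/
def BoundedOnZ2 (T : RSeq × RSeq → RSeq × RSeq) : Prop :=
  (∀ u, memZ2 u → memZ2 (T u)) ∧ ∃ C : ℝ, ∀ u, memZ2 u → Z2norm (T u) ≤ C * Z2norm u

/-- The matrix operator associated to four linear maps on sequences. -/
def matOp (α β δ γ : RSeq →ₗ[ℝ] RSeq) : RSeq × RSeq → RSeq × RSeq :=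
  fun u => (α u.1 + β u.2, δ u.1 + γ u.2)

/-- Membership in the Orlicz space ℓ_f = Dom KP. -/
def memLf (x : RSeq) : Prop := memL2 x ∧ memL2 (KP x)

/-- The ℓ_f quasinorm. -/
noncomputable def lfNorm (x : RSeq) : ℝ := l2norm (KP x) + l2norm x

/-- Membership in ℓ_f* = Ran KP. -/
def memLfStar (ω : RSeq) : Prop := ∃ x : RSeq, memL2 x ∧ memL2 (ω - KP x)

/-- The ℓ_f* quasinorm. -/
noncomputable def lfStarNorm (ω : RSeq) : ℝ :=
  sInf {r : ℝ | ∃ x : RSeq, memL2 x ∧ memL2 (ω - KP x) ∧ r = l2norm (ω - KP x) + l2norm x}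

/-- A bounded map on Z₂ is strictly singular if every linear subspace of Z₂ on which it is
bounded below is finite dimensional. -/
def StrictlySingular (T : RSeq × RSeq → RSeq × RSeq) : Prop :=
  ∀ V : Submodule ℝ (RSeq × RSeq), (∀ v ∈ V, memZ2 v) →
    (∃ c > 0, ∀ v ∈ V, c * Z2norm v ≤ Z2norm (T v)) → FiniteDimensional ℝ V

/-- A set of sequences is totally bounded (relatively compact) for the ℓ² norm. -/
def l2TotallyBounded (A : Set RSeq) : Prop :=
  ∀ ε > 0, ∃ S : Set RSeq, S.Finite ∧
    ∀ a ∈ A, ∃ s ∈ S, memL2 (a - s) ∧ l2norm (a - s) < ε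

/-- A map on Z₂ is compact if the image of the unit ball is totally bounded for the
Z₂ quasinorm. -/
def CompactOnZ2 (T : RSeq × RSeq → RSeq × RSeq) : Prop :=
  ∀ ε > 0, ∃ S : Set (RSeq × RSeq), S.Finite ∧
    ∀ u, memZ2 u → Z2norm u ≤ 1 → ∃ s ∈ S, memZ2 (T u - s) ∧ Z2norm (T u - s) < ε

lemma memL2_zero' : memL2 (0 : RSeq) := by
  simpa [memL2] using summable_zero

lemma KP_zero' : KP (0 : RSeq) = 0 := by
  funext n; simp [KP]

lemma l2norm_zero' : l2norm (0 : RSeq) = 0 := by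
  simp [l2norm]

lemma l2norm_nonneg' (x : RSeq) : 0 ≤ l2norm x := Real.sqrt_nonneg _

lemma memL2_neg' {x : RSeq} (h : memL2 x) : memL2 (-x) := by
  simpa [memL2, neg_sq] using h

lemma l2norm_neg' (x : RSeq) : l2norm (-x) = l2norm x := by
  simp [l2norm, neg_sq]

/-- If the matrix operator is bounded on Z₂, then the quasilinear maps
KP∘δ and δ∘KP from ℓ² to ℓ² are trivial. -/
theorem stmt_8 (α β δ γ : RSeq →ₗ[ℝ] RSeq)
    (hT : BoundedOnZ2 (matOp α β δ γ)) :
    ∃ (L₁ L₂ : RSeq →ₗ[ℝ] RSeq) (C : ℝ), 0 < C ∧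
      ∀ y : RSeq, memL2 y →
        memL2 (δ y) ∧
        memL2 (KP (δ y) - L₁ y) ∧ memL2 (δ (KP y) - L₂ y) ∧
        l2norm (KP (δ y) - L₁ y) ≤ C * l2norm y ∧
        l2norm (δ (KP y) - L₂ y) ≤ C * l2norm y := by
  obtain ⟨hmem, C, hC⟩ := hT
  refine ⟨α, -γ, |C| + 1, by positivity, ?_⟩
  intro y hy
  have hCy : C * l2norm y ≤ (|C| + 1) * l2norm y :=
    mul_le_mul_of_nonneg_right (by linarith [le_abs_self C]) (l2norm_nonneg' y)
  -- First test element: u = (y, 0)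
  have hu1 : memZ2 (y, (0 : RSeq)) := by
    refine ⟨memL2_zero', ?_⟩
    simpa [KP_zero'] using hy
  have hmo1 : matOp α β δ γ (y, 0) = (α y, δ y) := by
    simp [matOp]
  have hm1 : memZ2 (α y, δ y) := hmo1 ▸ hmem _ hu1
  have hn1 : Z2norm (α y, δ y) ≤ C * l2norm y := by
    have := hC _ hu1
    rw [hmo1] at this
    simpa [Z2norm, KP_zero', l2norm_zero'] using this
  have hδy : memL2 (δ y) := hm1.1
  have hKPδ : memL2 (KP (δ y) - α y) := by
    have := memL2_neg' hm1.2
    simpa [neg_sub] using this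
  have hKPδn : l2norm (KP (δ y) - α y) ≤ (|C| + 1) * l2norm y := by
    have h1 : l2norm (KP (δ y) - α y) = l2norm ((α y, δ y).1 - KP (α y, δ y).2) := by
      rw [← l2norm_neg' (KP (δ y) - α y), neg_sub]
    have h2 : l2norm ((α y, δ y).1 - KP (α y, δ y).2) ≤ Z2norm (α y, δ y) := by
      have := l2norm_nonneg' ((α y, δ y).2)
      simp only [Z2norm]; linarith
    calc l2norm (KP (δ y) - α y) ≤ Z2norm (α y, δ y) := h1 ▸ h2
      _ ≤ C * l2norm y := hn1
      _ ≤ (|C| + 1) * l2norm y := hCy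
  -- Second test element: u = (KP y, y)
  have hu2 : memZ2 (KP y, y) := by
    refine ⟨hy, ?_⟩
    simpa [sub_self] using memL2_zero'
  have hmo2 : matOp α β δ γ (KP y, y) = (α (KP y) + β y, δ (KP y) + γ y) := rfl
  have hm2 : memZ2 (α (KP y) + β y, δ (KP y) + γ y) := hmo2 ▸ hmem _ hu2
  have hn2 : Z2norm (α (KP y) + β y, δ (KP y) + γ y) ≤ C * l2norm y := by
    have := hC _ hu2
    rw [hmo2] at this
    simpa [Z2norm, sub_self, l2norm_zero'] using this
  have heq2 : δ (KP y) - (-γ) y = δ (KP y) + γ y := by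
    simp [sub_neg_eq_add]
  have hδKP : memL2 (δ (KP y) - (-γ) y) := heq2 ▸ hm2.1
  have hδKPn : l2norm (δ (KP y) - (-γ) y) ≤ (|C| + 1) * l2norm y := by
    rw [heq2]
    have h2 : l2norm (δ (KP y) + γ y) ≤ Z2norm (α (KP y) + β y, δ (KP y) + γ y) := by
      have := l2norm_nonneg' ((α (KP y) + β y, δ (KP y) + γ y).1
        - KP (α (KP y) + β y, δ (KP y) + γ y).2)
      simp only [Z2norm]; linarith
    linarith
  exact ⟨hδy, hKPδ, hδKP, hKPδn, hδKPn⟩
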